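/- arXiv:1009.1444 — 5 statements merged into one kernel-verified Lean document; each statement's English description precedes it below -/
import Mathlib

section
/- Let M be an m×m positive definite real symmetric matrix and z ∈ ℝ. Then tr(M⁻¹) ≤ z if and only if there exist real numbers u₁,…,u_m with z ≥ u₁+⋯+u_m and, for each k, the block matrix [[M, e_k],[e_kᵀ, u_k]] is positive semidefinite. -/
open Matrix

theorem trace_inv_le_iff_exists_blocks_posSemidef
    {m : ℕ} (M : Matrix (Fin m) (Fin m) ℝ) (hM : M.PosDef) (z : ℝ) :
    (M⁻¹).trace ≤ z ↔
      ∃ u : Fin m → ℝ, (∑ k, u k) ≤ z ∧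
        ∀ k : Fin m,
          (Matrix.fromBlocks M
            (Matrix.of fun i (_ : Fin 1) => (Pi.single k 1 : Fin m → ℝ) i)
            (Matrix.of fun (_ : Fin 1) j => (Pi.single k 1 : Fin m → ℝ) j)
            (Matrix.of fun (_ : Fin 1) (_ : Fin 1) => u k)).PosSemidef := by
  haveI := hM.isUnit.invertible
  have hC : ∀ k : Fin m,
      (Matrix.of fun (_ : Fin 1) j => (Pi.single k 1 : Fin m → ℝ) j) =
        (Matrix.of fun i (_ : Fin 1) => (Pi.single k 1 : Fin m → ℝ) i)ᴴ := by
    intro k; ext i j; simp [Matrix.conjTranspose_apply]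
  have key : ∀ (k : Fin m) (u : ℝ),
      (Matrix.fromBlocks M
        (Matrix.of fun i (_ : Fin 1) => (Pi.single k 1 : Fin m → ℝ) i)
        (Matrix.of fun (_ : Fin 1) j => (Pi.single k 1 : Fin m → ℝ) j)
        (Matrix.of fun (_ : Fin 1) (_ : Fin 1) => u)).PosSemidef ↔
      M⁻¹ k k ≤ u := by
    intro k u
    rw [hC k, Matrix.PosDef.fromBlocks₁₁ _ _ hM]
    have hent : ((Matrix.of fun (_ : Fin 1) (_ : Fin 1) => u) -
        (Matrix.of fun i (_ : Fin 1) => (Pi.single k 1 : Fin m → ℝ) i)ᴴ * M⁻¹ *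
          (Matrix.of fun i (_ : Fin 1) => (Pi.single k 1 : Fin m → ℝ) i)) =
        Matrix.of fun (_ : Fin 1) (_ : Fin 1) => u - M⁻¹ k k := by
      ext i j
      simp [Matrix.mul_apply, Matrix.sub_apply, Matrix.conjTranspose_apply,
        Pi.single_apply, Finset.sum_ite_eq', Finset.sum_ite_eq]
    rw [hent]
    constructor
    · intro h
      have := (Matrix.posSemidef_iff_dotProduct_mulVec.1 h).2 (fun _ => 1)
      simpa [dotProduct, Matrix.mulVec, dotProduct, Fin.sum_univ_one,
        sub_nonneg] using this
    · intro h
      rw [Matrix.posSemidef_iff_dotProduct_mulVec]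
      constructor
      · ext i j; fin_cases i; fin_cases j; simp [Matrix.conjTranspose_apply]
      · intro x
        have : (0:ℝ) ≤ (u - M⁻¹ k k) * (x 0 * x 0) :=
          mul_nonneg (by linarith) (mul_self_nonneg _)
        simpa [dotProduct, Matrix.mulVec, Fin.sum_univ_one, mul_comm,
          mul_left_comm, mul_assoc] using this
  have htr : (M⁻¹).trace = ∑ k, M⁻¹ k k := by simp [Matrix.trace, Matrix.diag]
  constructor
  · intro h
    refine ⟨fun k => M⁻¹ k k, by rw [← htr]; exact h, fun k => (key k _).2 le_rfl⟩
  · rintro ⟨u, hsum, hblocks⟩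
    calc (M⁻¹).trace = ∑ k, M⁻¹ k k := htr
    _ ≤ ∑ k, u k := Finset.sum_le_sum fun k _ => (key k (u k)).1 (hblocks k)
    _ ≤ z := hsum
end

section
/- Lukács' theorem (even degree case): a real polynomial p of degree n = 2k is nonnegative on the interval [a,b] (with a < b) if and only if p(t) = r(t)² + (t−a)(b−t)·q(t)² for some real polynomials r of degree at most k and q of degree at most k−1. -/
open Polynomial

private lemma luk_root_formula (m E D S v : ℝ) (hm : m ≠ 0)
    (hS2 : S^2 = E^2 - 4*m^2*D) (hv : 2*m^2*v = E + S) :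
    m^2*v^2 - E*v + D = 0 := by
  have h4 : (4:ℝ)*m^2 ≠ 0 := by positivity
  have h5 : 4*m^2*(m^2*v^2 - E*v + D) = 0 := by
    linear_combination (2*m^2*v - E + S)*hv + hS2
  rcases mul_eq_zero.mp h5 with h | h
  · exact absurd h h4
  · exact h

private lemma luk_V1 (a b B C : ℝ) (hab : a < b) (hD : B^2 - 4*C < 0) :
    ∃ v, 0 ≤ v ∧ (B - v*(a+b))^2 = 4*(1+v)*(C + v*a*b) := by
  have hm0 : (b - a) ≠ 0 := by intro h; linarith [sub_eq_zero.mp h]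
  have hm2 : (0:ℝ) < (b-a)^2 := by positivity
  set E := 2*B*(a+b) + 4*a*b + 4*C with hE
  have hinner : 0 ≤ E^2 - 4*(b-a)^2*(B^2-4*C) := by nlinarith [sq_nonneg E]
  set S := Real.sqrt (E^2 - 4*(b-a)^2*(B^2-4*C)) with hSdef
  have hS2 : S^2 = E^2 - 4*(b-a)^2*(B^2-4*C) := Real.sq_sqrt hinner
  have hSE : -E ≤ S := by
    have h1 : Real.sqrt (E^2) ≤ S := Real.sqrt_le_sqrt (by nlinarith)
    rw [Real.sqrt_sq_eq_abs] at h1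
    linarith [neg_abs_le E]
  refine ⟨(E + S)/(2*(b-a)^2), div_nonneg (by linarith) (by positivity), ?_⟩
  have hv : 2*(b-a)^2*((E + S)/(2*(b-a)^2)) = E + S := by field_simp
  have h := luk_root_formula (b-a) E (B^2-4*C) S ((E + S)/(2*(b-a)^2)) hm0 hS2 hv
  linear_combination h

private lemma luk_V2 (a b c d : ℝ) (hab : a < b)
    (hcd : (c ≤ a ∧ d ≤ a) ∨ (b ≤ c ∧ b ≤ d)) :
    ∃ v, 0 ≤ v ∧ ((c+d) + v*(a+b))^2 = 4*(1+v)*(c*d + v*a*b) := by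
  have hm0 : (b - a) ≠ 0 := by intro h; linarith [sub_eq_zero.mp h]
  set E := 2*((a-c)*(b-d)+(a-d)*(b-c)) with hE
  have hprod : 0 ≤ (a-c)*(a-d)*((b-c)*(b-d)) := by
    rcases hcd with ⟨h1, h2⟩ | ⟨h1, h2⟩
    · have := mul_nonneg (mul_nonneg (by linarith : (0:ℝ) ≤ a-c) (by linarith : (0:ℝ) ≤ a-d))
        (mul_nonneg (by linarith : (0:ℝ) ≤ b-c) (by linarith : (0:ℝ) ≤ b-d))
      linarith
    · have := mul_nonneg (mul_nonneg (by linarith : (0:ℝ) ≤ c-a) (by linarith : (0:ℝ) ≤ d-a))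
        (mul_nonneg (by linarith : (0:ℝ) ≤ c-b) (by linarith : (0:ℝ) ≤ d-b))
      nlinarith
  have hE0 : 0 ≤ E := by
    rcases hcd with ⟨h1, h2⟩ | ⟨h1, h2⟩
    · nlinarith [mul_nonneg (by linarith : (0:ℝ) ≤ a-c) (by linarith : (0:ℝ) ≤ b-d),
        mul_nonneg (by linarith : (0:ℝ) ≤ a-d) (by linarith : (0:ℝ) ≤ b-c)]
    · nlinarith [mul_nonneg (by linarith : (0:ℝ) ≤ c-a) (by linarith : (0:ℝ) ≤ d-b),
        mul_nonneg (by linarith : (0:ℝ) ≤ d-a) (by linarith : (0:ℝ) ≤ c-b)]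
  set S := 4*Real.sqrt ((a-c)*(a-d)*((b-c)*(b-d))) with hSdef
  have hS0 : 0 ≤ S := by positivity
  have hS2 : S^2 = E^2 - 4*(b-a)^2*(c-d)^2 := by
    have : S^2 = 16*((a-c)*(a-d)*((b-c)*(b-d))) := by
      rw [hSdef, mul_pow, Real.sq_sqrt hprod]; ring
    rw [this, hE]; ring
  refine ⟨(E + S)/(2*(b-a)^2), div_nonneg (by linarith) (by positivity), ?_⟩
  have hv : 2*(b-a)^2*((E + S)/(2*(b-a)^2)) = E + S := by field_simp
  have h := luk_root_formula (b-a) E ((c-d)^2) S ((E + S)/(2*(b-a)^2)) hm0 hS2 hv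
  linear_combination h

private lemma luk_V3 (a b c d : ℝ) (hab : a < b) (hc : c ≤ a) (hd : b ≤ d)
    (hne : c < a ∨ b < d) :
    ∃ v, 1 < v ∧ (v*(a+b) - (c+d))^2 = 4*(v-1)*(v*a*b - c*d) := by
  have hm0 : (b - a) ≠ 0 := by intro h; linarith [sub_eq_zero.mp h]
  set E := 2*(a+b)*(c+d) - 4*a*b - 4*c*d with hE
  have hprod : 0 ≤ (a-c)*(d-b)*((b-c)*(d-a)) := by
    have := mul_nonneg (mul_nonneg (by linarith : (0:ℝ) ≤ a-c) (by linarith : (0:ℝ) ≤ d-b))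
      (mul_nonneg (by linarith : (0:ℝ) ≤ b-c) (by linarith : (0:ℝ) ≤ d-a))
    linarith
  set S := 4*Real.sqrt ((a-c)*(d-b)*((b-c)*(d-a))) with hSdef
  have hS0 : 0 ≤ S := by positivity
  have hS2 : S^2 = E^2 - 4*(b-a)^2*(c-d)^2 := by
    have : S^2 = 16*((a-c)*(d-b)*((b-c)*(d-a))) := by
      rw [hSdef, mul_pow, Real.sq_sqrt hprod]; ring
    rw [this, hE]; ring
  have hEgt : 2*(b-a)^2 < E + S := by
    rcases hne with h | h
    · nlinarith [mul_pos (by linarith : (0:ℝ) < b-a) (by linarith : (0:ℝ) < a-c),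
        mul_nonneg (by linarith : (0:ℝ) ≤ a-c) (by linarith : (0:ℝ) ≤ d-b),
        mul_nonneg (by linarith : (0:ℝ) ≤ b-a) (by linarith : (0:ℝ) ≤ d-b)]
    · nlinarith [mul_pos (by linarith : (0:ℝ) < b-a) (by linarith : (0:ℝ) < d-b),
        mul_nonneg (by linarith : (0:ℝ) ≤ a-c) (by linarith : (0:ℝ) ≤ d-b),
        mul_nonneg (by linarith : (0:ℝ) ≤ b-a) (by linarith : (0:ℝ) ≤ a-c)]
  refine ⟨(E + S)/(2*(b-a)^2), ?_, ?_⟩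
  · rw [lt_div_iff₀ (by positivity)]; linarith
  · have hv : 2*(b-a)^2*((E + S)/(2*(b-a)^2)) = E + S := by field_simp
    have h := luk_root_formula (b-a) E ((c-d)^2) S ((E + S)/(2*(b-a)^2)) hm0 hS2 hv
    linear_combination h

private lemma luk_lin_deg (α β : ℝ) : (C α * X + C β : ℝ[X]).natDegree ≤ 1 := by
  apply le_trans (natDegree_add_le _ _)
  simp [natDegree_C]
  exact le_trans (natDegree_C_mul_le _ _) (by simp)

private lemma luk_Q1 (a b B C' v : ℝ) (hv : 0 ≤ v)
    (heq : (B - v*(a+b))^2 = 4*(1+v)*(C' + v*a*b)) :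
    ∃ s : ℝ[X], s.natDegree ≤ 1 ∧
      (X^2 + C B * X + C C' : ℝ[X]) =
        s^2 + (X - C a)*(C b - X)*(C (Real.sqrt v))^2 := by
  have h1v : (0:ℝ) < 1 + v := by linarith
  set α := Real.sqrt (1+v) with hα
  have hα2 : α^2 = 1 + v := Real.sq_sqrt (le_of_lt h1v)
  have hα0 : α ≠ 0 := by positivity
  set β := (B - v*(a+b))/(2*α) with hβdef
  have hβ : 2*α*β = B - v*(a+b) := by rw [hβdef]; field_simp
  have hγ2 : (Real.sqrt v)^2 = v := Real.sq_sqrt hv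
  have hβ2 : β^2 = C' + v*a*b := by
    have h : β^2 = (B - v*(a+b))^2/(4*(1+v)) := by
      rw [hβdef, div_pow, mul_pow, hα2]; norm_num
    rw [h, heq]; field_simp
  refine ⟨C α * X + C β, luk_lin_deg α β, ?_⟩
  apply Polynomial.funext
  intro x
  simp only [eval_add, eval_mul, eval_pow, eval_sub, eval_X, eval_C]
  linear_combination (-(x^2))*hα2 + (-((x-a)*(b-x)))*hγ2 + (-x)*hβ + (-1)*hβ2

private lemma luk_Q2 (a b c d v : ℝ) (hv : 0 ≤ v)
    (heq : ((c+d) + v*(a+b))^2 = 4*(1+v)*(c*d + v*a*b)) :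
    ∃ s : ℝ[X], s.natDegree ≤ 1 ∧
      ((X - C c)*(X - C d) : ℝ[X]) =
        s^2 + (X - C a)*(C b - X)*(C (Real.sqrt v))^2 := by
  have h1v : (0:ℝ) < 1 + v := by linarith
  set α := Real.sqrt (1+v) with hα
  have hα2 : α^2 = 1 + v := Real.sq_sqrt (le_of_lt h1v)
  have hα0 : α ≠ 0 := by positivity
  set β := (-(c+d) - v*(a+b))/(2*α) with hβdef
  have hβ : 2*α*β = -(c+d) - v*(a+b) := by rw [hβdef]; field_simp
  have hγ2 : (Real.sqrt v)^2 = v := Real.sq_sqrt hv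
  have hβ2 : β^2 = c*d + v*a*b := by
    have h : β^2 = ((c+d) + v*(a+b))^2/(4*(1+v)) := by
      rw [hβdef, div_pow, mul_pow, hα2]; ring_nf
    rw [h, heq]; field_simp
  refine ⟨C α * X + C β, luk_lin_deg α β, ?_⟩
  apply Polynomial.funext
  intro x
  simp only [eval_add, eval_mul, eval_pow, eval_sub, eval_X, eval_C]
  linear_combination (-(x^2))*hα2 + (-((x-a)*(b-x)))*hγ2 + (-x)*hβ + (-1)*hβ2

private lemma luk_Q3 (a b c d v : ℝ) (hv : 1 < v)
    (heq : (v*(a+b) - (c+d))^2 = 4*(v-1)*(v*a*b - c*d)) :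
    ∃ s : ℝ[X], s.natDegree ≤ 1 ∧
      (-((X - C c)*(X - C d)) : ℝ[X]) =
        s^2 + (X - C a)*(C b - X)*(C (Real.sqrt v))^2 := by
  have h1v : (0:ℝ) < v - 1 := by linarith
  set α := Real.sqrt (v-1) with hα
  have hα2 : α^2 = v - 1 := Real.sq_sqrt (le_of_lt h1v)
  have hα0 : α ≠ 0 := by positivity
  set β := ((c+d) - v*(a+b))/(2*α) with hβdef
  have hβ : 2*α*β = (c+d) - v*(a+b) := by rw [hβdef]; field_simp
  have hγ2 : (Real.sqrt v)^2 = v := Real.sq_sqrt (by linarith)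
  have hβ2 : β^2 = v*a*b - c*d := by
    have h : β^2 = (v*(a+b) - (c+d))^2/(4*(v-1)) := by
      rw [hβdef, div_pow, mul_pow, hα2]; ring_nf
    rw [h, heq]; field_simp
  refine ⟨C α * X + C β, luk_lin_deg α β, ?_⟩
  apply Polynomial.funext
  intro x
  simp only [eval_add, eval_mul, eval_pow, eval_sub, eval_neg, eval_X, eval_C]
  linear_combination (-(x^2))*hα2 + (-((x-a)*(b-x)))*hγ2 + (-x)*hβ + (-1)*hβ2

private lemma luk_cont_nonneg {a b : ℝ} (hab : a < b) (f g : ℝ[X]) (hf : f ≠ 0)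
    (h : ∀ t ∈ Set.Icc a b, f.eval t ≠ 0 → 0 ≤ g.eval t) :
    ∀ t ∈ Set.Icc a b, 0 ≤ g.eval t := by
  intro t₀ ht₀
  by_contra hneg
  push_neg at hneg
  have hU : IsOpen {t : ℝ | g.eval t < 0} :=
    isOpen_lt (Polynomial.continuous g) continuous_const
  obtain ⟨δ, hδ, hball⟩ := Metric.isOpen_iff.mp hU t₀ hneg
  set c' := max a (t₀ - δ/2) with hc'
  set d' := min b (t₀ + δ/2) with hd'
  have hcd : c' < d' := by
    rw [hc', hd', lt_min_iff, max_lt_iff, max_lt_iff]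
    obtain ⟨h1, h2⟩ := ht₀
    exact ⟨⟨hab, by linarith⟩, ⟨by linarith, by linarith⟩⟩
  have hinf : (Set.Icc c' d').Infinite := Set.Icc_infinite hcd
  have hroots : {x : ℝ | f.IsRoot x}.Finite := f.finite_setOf_isRoot hf
  obtain ⟨t, htI, htR⟩ := (hinf.diff hroots).nonempty
  have htab : t ∈ Set.Icc a b := by
    obtain ⟨h1, h2⟩ := htI
    exact ⟨le_trans (le_max_left _ _) h1, le_trans h2 (min_le_left _ _)⟩
  have htb : t ∈ Metric.ball t₀ δ := by
    obtain ⟨h1, h2⟩ := htI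
    rw [Metric.mem_ball, Real.dist_eq, abs_lt]
    constructor
    · have := le_trans (le_max_right a (t₀ - δ/2)) h1; linarith
    · have := le_trans h2 (min_le_right b (t₀ + δ/2)); linarith
  have := hball htb
  exact absurd (h t htab htR) (not_le.mpr this)

private lemma luk_double_root {a b : ℝ} (p : ℝ[X])
    (hp : ∀ t ∈ Set.Icc a b, 0 ≤ p.eval t) {c : ℝ} (hc : c ∈ Set.Ioo a b)
    (hroot : p.IsRoot c) : (X - C c)^2 ∣ p := by
  obtain ⟨p₁, hp₁⟩ := (dvd_iff_isRoot.mpr hroot)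
  have hkey : p₁.IsRoot c := by
    have hge : 0 ≤ p₁.eval c := by
      have htend : Filter.Tendsto (fun t => p₁.eval t) (nhdsWithin c (Set.Ioi c)) (nhds (p₁.eval c)) :=
        ((Polynomial.continuous p₁).tendsto c).mono_left nhdsWithin_le_nhds
      refine ge_of_tendsto htend ?_
      filter_upwards [Ioo_mem_nhdsGT_of_mem (Set.mem_Ico.mpr ⟨le_refl c, hc.2⟩)] with t ht
      have hpt : 0 ≤ p.eval t := hp t ⟨by linarith [hc.1, ht.1], le_of_lt ht.2⟩
      rw [hp₁, eval_mul, eval_sub, eval_X, eval_C] at hpt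
      nlinarith [ht.1]
    have hle : p₁.eval c ≤ 0 := by
      have htend : Filter.Tendsto (fun t => p₁.eval t) (nhdsWithin c (Set.Iio c)) (nhds (p₁.eval c)) :=
        ((Polynomial.continuous p₁).tendsto c).mono_left nhdsWithin_le_nhds
      refine le_of_tendsto htend ?_
      filter_upwards [Ioo_mem_nhdsLT_of_mem (Set.mem_Ioc.mpr ⟨hc.1, le_refl c⟩)] with t ht
      have hpt : 0 ≤ p.eval t := hp t ⟨le_of_lt ht.1, by linarith [hc.2, ht.2]⟩
      rw [hp₁, eval_mul, eval_sub, eval_X, eval_C] at hpt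
      nlinarith [ht.2]
    exact le_antisymm hle hge
  obtain ⟨p₂, hp₂⟩ := dvd_iff_isRoot.mpr hkey
  exact ⟨p₂, by rw [hp₁, hp₂]; ring⟩

private lemma luk_aux (a b : ℝ) (hab : a < b) :
    ∀ (k : ℕ) (p : ℝ[X]), p.natDegree = 2*k → (∀ t ∈ Set.Icc a b, 0 ≤ p.eval t) →
    ∃ r q : ℝ[X], r.natDegree ≤ k ∧ (q = 0 ∨ q.natDegree + 1 ≤ k) ∧
      p = r^2 + (X - C a)*(C b - X)*q^2 := by
  intro k
  induction k with
  | zero =>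
    intro p hdeg hp
    have hc : p = C (p.coeff 0) := eq_C_of_natDegree_eq_zero (by omega)
    have h0 : 0 ≤ p.coeff 0 := by
      have := hp a ⟨le_refl a, le_of_lt hab⟩
      rwa [hc, eval_C] at this
    refine ⟨C (Real.sqrt (p.coeff 0)), 0, by simp [natDegree_C], Or.inl rfl, ?_⟩
    have hsq : (C (Real.sqrt (p.coeff 0)) : ℝ[X])^2 = C (p.coeff 0) := by
      rw [← C_pow, Real.sq_sqrt h0]
    rw [hsq, ← hc]
    ring
  | succ k ih =>
    intro p hdeg hp
    have hp0 : p ≠ 0 := by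
      intro h
      rw [h, natDegree_zero] at hdeg
      omega
    have hCbX : (C b - X : ℝ[X]).natDegree = 1 := by
      rw [show (C b - X : ℝ[X]) = -(X - C b) by ring, natDegree_neg, natDegree_X_sub_C]
    have hW2 : ((X - C a)*(C b - X) : ℝ[X]).natDegree ≤ 2 := by
      refine le_trans (natDegree_mul_le) ?_
      rw [natDegree_X_sub_C, hCbX]
    have hmain : ∃ (F G s : ℝ[X]) (u : ℝ), p = F * G ∧ F.natDegree = 2 ∧
        s.natDegree ≤ 1 ∧ F = s^2 + (X - C a)*(C b - X)*(C u)^2 := by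
      by_cases hint : ∃ c ∈ Set.Ioo a b, p.IsRoot c
      · obtain ⟨c, hc, hroot⟩ := hint
        obtain ⟨G, hG⟩ := luk_double_root p hp hc hroot
        refine ⟨(X - C c)^2, G, X - C c, 0, hG, ?_, le_of_eq (natDegree_X_sub_C c), by simp⟩
        rw [(monic_X_sub_C c).natDegree_pow, natDegree_X_sub_C]
      · -- no interior root
        have hmapdeg : 0 < (p.map (algebraMap ℝ ℂ)).degree := by
          rw [Polynomial.degree_map]
          exact natDegree_pos_iff_degree_pos.mp (by omega)
        obtain ⟨z, hz⟩ := Complex.exists_root hmapdeg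
        by_cases him : z.im = 0
        · -- real root z.re, outside (a,b)
          set c := z.re with hcdef
          have hcz : (algebraMap ℝ ℂ) c = z := by
            apply Complex.ext <;> simp [him, hcdef]
          have hroot : p.IsRoot c := by
            have hz' : eval₂ (algebraMap ℝ ℂ) z p = 0 := by rw [← eval_map]; exact hz
            rw [← hcz, eval₂_at_apply] at hz'
            exact (map_eq_zero_iff (algebraMap ℝ ℂ) (RingHom.injective _)).mp hz'
          have hcout : c ≤ a ∨ b ≤ c := by
            by_contra h
            push_neg at h
            exact hint ⟨c, ⟨h.1, h.2⟩, hroot⟩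
          obtain ⟨p₁, hp₁⟩ := dvd_iff_isRoot.mpr hroot
          have hp₁0 : p₁ ≠ 0 := by
            intro h; rw [h, mul_zero] at hp₁; exact hp0 hp₁
          have hp₁deg : p₁.natDegree = 2*k + 1 := by
            have := natDegree_mul (X_sub_C_ne_zero c) hp₁0
            rw [← hp₁, natDegree_X_sub_C] at this
            omega
          have hmapdeg₁ : 0 < (p₁.map (algebraMap ℝ ℂ)).degree := by
            rw [Polynomial.degree_map]
            exact natDegree_pos_iff_degree_pos.mp (by omega)
          obtain ⟨z₁, hz₁⟩ := Complex.exists_root hmapdeg₁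
          by_cases him₁ : z₁.im = 0
          · -- second real root d, also outside (a,b)
            set d := z₁.re with hddef
            have hdz : (algebraMap ℝ ℂ) d = z₁ := by
              apply Complex.ext <;> simp [him₁, hddef]
            have hroot₁ : p₁.IsRoot d := by
              have hz' : eval₂ (algebraMap ℝ ℂ) z₁ p₁ = 0 := by rw [← eval_map]; exact hz₁
              rw [← hdz, eval₂_at_apply] at hz'
              exact (map_eq_zero_iff (algebraMap ℝ ℂ) (RingHom.injective _)).mp hz'
            have hrootd : p.IsRoot d := by
              rw [IsRoot, hp₁, eval_mul, hroot₁.eq_zero, mul_zero]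
            have hdout : d ≤ a ∨ b ≤ d := by
              by_contra h
              push_neg at h
              exact hint ⟨d, ⟨h.1, h.2⟩, hrootd⟩
            obtain ⟨G, hG⟩ := dvd_iff_isRoot.mpr hroot₁
            have hpfact : p = (X - C c)*(X - C d)*G := by rw [hp₁, hG]; ring
            have hFdeg : ((X - C c)*(X - C d) : ℝ[X]).natDegree = 2 := by
              rw [natDegree_mul (X_sub_C_ne_zero c) (X_sub_C_ne_zero d),
                natDegree_X_sub_C, natDegree_X_sub_C]
            -- position cases
            rcases hcout with hca | hbc
            · rcases hdout with hda | hbd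
              · -- both ≤ a
                obtain ⟨v, hv0, hveq⟩ := luk_V2 a b c d hab (Or.inl ⟨hca, hda⟩)
                obtain ⟨s, hs1, hsrep⟩ := luk_Q2 a b c d v hv0 hveq
                exact ⟨(X - C c)*(X - C d), G, s, Real.sqrt v, hpfact, hFdeg, hs1, hsrep⟩
              · -- c ≤ a, b ≤ d : mixed
                by_cases hne : c < a ∨ b < d
                · obtain ⟨v, hv1, hveq⟩ := luk_V3 a b c d hab hca hbd hne
                  obtain ⟨s, hs1, hsrep⟩ := luk_Q3 a b c d v hv1 hveq
                  refine ⟨-((X - C c)*(X - C d)), -G, s, Real.sqrt v, by rw [hpfact]; ring,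
                    by rw [natDegree_neg]; exact hFdeg, hs1, hsrep⟩
                · push_neg at hne
                  have hca' : c = a := le_antisymm hca hne.1
                  have hbd' : d = b := le_antisymm hne.2 hbd
                  refine ⟨-((X - C c)*(X - C d)), -G, 0, 1, by rw [hpfact]; ring,
                    by rw [natDegree_neg]; exact hFdeg, by simp, ?_⟩
                  rw [hca', hbd']
                  simp only [map_one, one_pow]
                  ring
            · rcases hdout with hda | hbd
              · -- d ≤ a, b ≤ c : mixed (swapped)
                by_cases hne : d < a ∨ b < c
                · obtain ⟨v, hv1, hveq⟩ := luk_V3 a b d c hab hda hbc hne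
                  obtain ⟨s, hs1, hsrep⟩ := luk_Q3 a b d c v hv1 hveq
                  refine ⟨-((X - C d)*(X - C c)), -G, s, Real.sqrt v, by rw [hpfact]; ring,
                    ?_, hs1, hsrep⟩
                  rw [natDegree_neg, natDegree_mul (X_sub_C_ne_zero d) (X_sub_C_ne_zero c),
                    natDegree_X_sub_C, natDegree_X_sub_C]
                · push_neg at hne
                  have hda' : d = a := le_antisymm hda hne.1
                  have hbc' : c = b := le_antisymm hne.2 hbc
                  refine ⟨-((X - C c)*(X - C d)), -G, 0, 1, by rw [hpfact]; ring,
                    by rw [natDegree_neg]; exact hFdeg, by simp, ?_⟩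
                  rw [hda', hbc']
                  simp only [map_one, one_pow]
                  ring
              · -- both ≥ b
                obtain ⟨v, hv0, hveq⟩ := luk_V2 a b c d hab (Or.inr ⟨hbc, hbd⟩)
                obtain ⟨s, hs1, hsrep⟩ := luk_Q2 a b c d v hv0 hveq
                exact ⟨(X - C c)*(X - C d), G, s, Real.sqrt v, hpfact, hFdeg, hs1, hsrep⟩
          · -- nonreal root of p₁ : quadratic factor of p₁ (hence of p)
            have h0 : aeval z₁ p₁ = 0 := by
              rw [aeval_def, ← eval_map]; exact hz₁
            obtain ⟨G, hG⟩ := p₁.quadratic_dvd_of_aeval_eq_zero_im_ne_zero h0 him₁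
            have hnorm : ‖z₁‖^2 = z₁.re^2 + z₁.im^2 := by
              rw [← Complex.normSq_eq_norm_sq, Complex.normSq_apply]; ring
            have hD : (-(2*z₁.re))^2 - 4*(‖z₁‖^2) < 0 := by
              rw [hnorm]
              have : z₁.im^2 > 0 := by positivity
              nlinarith
            obtain ⟨v, hv0, hveq⟩ := luk_V1 a b (-(2*z₁.re)) (‖z₁‖^2) hab hD
            obtain ⟨s, hs1, hsrep⟩ := luk_Q1 a b (-(2*z₁.re)) (‖z₁‖^2) v hv0 hveq
            have hFeq : (X^2 + C (-(2*z₁.re)) * X + C (‖z₁‖^2) : ℝ[X]) =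
                X ^ 2 - C (2 * z₁.re) * X + C (‖z₁‖ ^ 2) := by
              rw [map_neg]; ring
            refine ⟨X^2 + C (-(2*z₁.re)) * X + C (‖z₁‖^2), (X - C c)*G, s, Real.sqrt v,
              ?_, ?_, hs1, hsrep⟩
            · rw [hp₁, hG, hFeq]; ring
            · rw [show (X^2 + C (-(2*z₁.re)) * X + C (‖z₁‖^2) : ℝ[X]) =
                C 1 * X^2 + C (-(2*z₁.re)) * X + C (‖z₁‖^2) by simp]
              exact natDegree_quadratic one_ne_zero
        · -- nonreal root of p : quadratic factor
          have h0 : aeval z p = 0 := by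
            rw [aeval_def, ← eval_map]; exact hz
          obtain ⟨G, hG⟩ := p.quadratic_dvd_of_aeval_eq_zero_im_ne_zero h0 him
          have hnorm : ‖z‖^2 = z.re^2 + z.im^2 := by
            rw [← Complex.normSq_eq_norm_sq, Complex.normSq_apply]; ring
          have hD : (-(2*z.re))^2 - 4*(‖z‖^2) < 0 := by
            rw [hnorm]
            have : z.im^2 > 0 := by positivity
            nlinarith
          obtain ⟨v, hv0, hveq⟩ := luk_V1 a b (-(2*z.re)) (‖z‖^2) hab hD
          obtain ⟨s, hs1, hsrep⟩ := luk_Q1 a b (-(2*z.re)) (‖z‖^2) v hv0 hveq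
          have hFeq : (X^2 + C (-(2*z.re)) * X + C (‖z‖^2) : ℝ[X]) =
              X ^ 2 - C (2 * z.re) * X + C (‖z‖ ^ 2) := by
            rw [map_neg]; ring
          refine ⟨X^2 + C (-(2*z.re)) * X + C (‖z‖^2), G, s, Real.sqrt v, ?_, ?_, hs1, hsrep⟩
          · rw [hG, hFeq]
          · rw [show (X^2 + C (-(2*z.re)) * X + C (‖z‖^2) : ℝ[X]) =
              C 1 * X^2 + C (-(2*z.re)) * X + C (‖z‖^2) by simp]
            exact natDegree_quadratic one_ne_zero
    -- epilogue
    obtain ⟨F, G, s, u, hfact, hF2, hs1, hrep⟩ := hmain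
    have hG0 : G ≠ 0 := by
      intro h; rw [h, mul_zero] at hfact; exact hp0 hfact
    have hF0 : F ≠ 0 := by
      intro h; rw [h, zero_mul] at hfact; exact hp0 hfact
    have hGdeg : G.natDegree = 2*k := by
      have := natDegree_mul hF0 hG0
      rw [← hfact, hF2] at this
      omega
    have hFnn : ∀ t ∈ Set.Icc a b, 0 ≤ F.eval t := by
      intro t ht
      rw [hrep]
      simp only [eval_add, eval_mul, eval_pow, eval_sub, eval_X, eval_C]
      have h1 : 0 ≤ (t - a)*(b - t)*(u)^2 :=
        mul_nonneg (mul_nonneg (by linarith [ht.1]) (by linarith [ht.2])) (sq_nonneg u)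
      nlinarith [sq_nonneg (s.eval t)]
    have hGnn : ∀ t ∈ Set.Icc a b, 0 ≤ G.eval t := by
      apply luk_cont_nonneg hab F G hF0
      intro t ht hft
      have hFpos : 0 < F.eval t := lt_of_le_of_ne (hFnn t ht) (Ne.symm hft)
      have hpt := hp t ht
      rw [hfact, eval_mul] at hpt
      by_contra h
      push_neg at h
      nlinarith [mul_pos hFpos (neg_pos.mpr h)]
    obtain ⟨r₂, q₂, hr₂, hq₂, hGrep⟩ := ih G hGdeg hGnn
    rcases hq₂ with hq₂ | hq₂
    · -- q₂ = 0
      subst hq₂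
      refine ⟨s*r₂, C u * r₂, ?_, Or.inr ?_, ?_⟩
      · refine le_trans (natDegree_mul_le) ?_
        have := add_le_add hs1 hr₂
        omega
      · have := le_trans (natDegree_C_mul_le u r₂) hr₂
        omega
      · rw [hfact, hrep, hGrep]; ring
    · -- general case
      refine ⟨s*r₂ - (X - C a)*(C b - X)*(C u)*q₂, s*q₂ + C u * r₂, ?_, Or.inr ?_, ?_⟩
      · have h1 : (s*r₂).natDegree ≤ 1 + k := le_trans (natDegree_mul_le) (add_le_add hs1 hr₂)
        have h2 : ((X - C a)*(C b - X)*(C u) : ℝ[X]).natDegree ≤ 2 := by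
          refine le_trans (natDegree_mul_le) ?_
          rw [natDegree_C]
          omega
        have h3 : ((X - C a)*(C b - X)*(C u)*q₂).natDegree ≤ 2 + q₂.natDegree :=
          le_trans (natDegree_mul_le) (add_le_add h2 le_rfl)
        refine le_trans (natDegree_sub_le _ _) (max_le (by omega) (by omega))
      · have h4 : (s*q₂).natDegree ≤ 1 + q₂.natDegree :=
          le_trans (natDegree_mul_le) (add_le_add hs1 le_rfl)
        have h5 : (C u * r₂).natDegree ≤ k := le_trans (natDegree_C_mul_le _ _) hr₂
        have := le_trans (natDegree_add_le _ _) (max_le (by omega : (s*q₂).natDegree ≤ k) h5)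
        omega
      · rw [hfact, hrep, hGrep]; ring

theorem lukacs_even (p : Polynomial ℝ) (k : ℕ) (hdeg : p.natDegree = 2 * k)
    (a b : ℝ) (hab : a < b) :
    (∀ t ∈ Set.Icc a b, 0 ≤ p.eval t) ↔
      ∃ r q : Polynomial ℝ, r.natDegree ≤ k ∧ q.natDegree ≤ k - 1 ∧
        p = r ^ 2 + (X - C a) * (C b - X) * q ^ 2 := by
  constructor
  · intro hp
    obtain ⟨r, q, hr, hq, heq⟩ := luk_aux a b hab k p hdeg hp
    refine ⟨r, q, hr, ?_, heq⟩
    rcases hq with h | h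
    · rw [h, natDegree_zero]; omega
    · omega
  · rintro ⟨r, q, hr, hq, rfl⟩ t ht
    simp only [eval_add, eval_mul, eval_pow, eval_sub, eval_X, eval_C]
    have h1 : 0 ≤ (t - a)*(b - t)*(q.eval t)^2 :=
      mul_nonneg (mul_nonneg (by linarith [ht.1]) (by linarith [ht.2])) (sq_nonneg _)
    nlinarith [sq_nonneg (r.eval t)]
end

section
/- Let p be a nonzero real polynomial of degree d that is nonnegative on a set I ⊆ ℝ which is the union of k₁ singletons and k₂ nondegenerate closed intervals, all pairwise disjoint. Then the number of distinct zeros of p lying in I is at most min((k₁ + 2k₂ + d)/2, d). -/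
open Polynomial

theorem card_zeros_le_of_nonneg_on_union
    (p : Polynomial ℝ) (hp : p ≠ 0) (d k₁ k₂ : ℕ) (hdeg : p.natDegree = d)
    (s : Fin k₁ → ℝ) (a b : Fin k₂ → ℝ) (hab : ∀ i, a i < b i)
    (F : Fin k₁ ⊕ Fin k₂ → Set ℝ)
    (hF : F = Sum.elim (fun j => {s j}) (fun i => Set.Icc (a i) (b i)))
    (hdisj : Pairwise (Function.onFun Disjoint F))
    (I : Set ℝ) (hI : I = ⋃ i, F i)
    (hnonneg : ∀ t ∈ I, 0 ≤ p.eval t) :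
    (({t ∈ I | p.eval t = 0}.ncard : ℝ)) ≤
      min (((k₁ : ℝ) + 2 * k₂ + d) / 2) (d : ℝ) := by
  classical
  set T : Finset ℝ := p.roots.toFinset.filter (fun t => t ∈ I) with hTdef
  have hZT : {t ∈ I | p.eval t = 0} = ↑T := by
    ext t
    simp only [Set.mem_setOf_eq, hTdef, Finset.coe_filter, Multiset.mem_toFinset,
      mem_roots, IsRoot.def, ne_eq, hp, not_false_eq_true, true_and]
    tauto
  -- multiplicity facts
  have hmult1 : ∀ t ∈ T, 1 ≤ p.rootMultiplicity t := by
    intro t ht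
    rw [hTdef, Finset.mem_filter, Multiset.mem_toFinset, mem_roots hp] at ht
    exact (rootMultiplicity_pos hp).2 ht.1
  have hsum : ∑ t ∈ T, p.rootMultiplicity t ≤ d := by
    calc ∑ t ∈ T, p.rootMultiplicity t
        = ∑ t ∈ T, p.roots.count t := by
          refine Finset.sum_congr rfl fun t _ => ?_
          rw [count_roots]
      _ ≤ ∑ t ∈ p.roots.toFinset, p.roots.count t :=
          Finset.sum_le_sum_of_subset (Finset.filter_subset _ _)
      _ = Multiset.card p.roots := p.roots.toFinset_sum_count_eq
      _ ≤ p.natDegree := p.card_roots'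
      _ = d := hdeg
  -- boundary predicate
  set P : ℝ → Prop := fun t => (∃ j, t = s j) ∨ (∃ i, t = a i ∨ t = b i) with hP
  set E : Finset ℝ := T.filter P with hE
  set E' : Finset ℝ := T.filter (fun t => ¬ P t) with hE'
  have hsplit : E.card + E'.card = T.card := Finset.card_filter_add_card_filter_not _
  -- boundary card bound
  have hEcard : E.card ≤ k₁ + 2 * k₂ := by
    have hsub : E ⊆ (Finset.univ.image s) ∪ (Finset.univ.image a) ∪ (Finset.univ.image b) := by
      intro t ht
      rw [hE, Finset.mem_filter] at ht
      simp only [Finset.mem_union, Finset.mem_image, Finset.mem_univ, true_and]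
      rcases ht.2 with ⟨j, rfl⟩ | ⟨i, rfl | rfl⟩
      · exact Or.inl (Or.inl ⟨j, rfl⟩)
      · exact Or.inl (Or.inr ⟨i, rfl⟩)
      · exact Or.inr ⟨i, rfl⟩
    calc E.card ≤ _ := Finset.card_le_card hsub
      _ ≤ (Finset.univ.image s ∪ Finset.univ.image a).card + (Finset.univ.image b).card :=
          Finset.card_union_le _ _
      _ ≤ ((Finset.univ.image s).card + (Finset.univ.image a).card) + (Finset.univ.image b).card := by
          gcongr
          exact Finset.card_union_le _ _
      _ ≤ (k₁ + k₂) + k₂ := by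
          have h1 : (Finset.univ.image s).card ≤ k₁ :=
            Finset.card_image_le.trans (by simp)
          have h2 : (Finset.univ.image a).card ≤ k₂ :=
            Finset.card_image_le.trans (by simp)
          have h3 : (Finset.univ.image b).card ≤ k₂ :=
            Finset.card_image_le.trans (by simp)
          omega
      _ = k₁ + 2 * k₂ := by ring
  -- interior zeros have multiplicity ≥ 2
  have hmult2 : ∀ t ∈ E', 2 ≤ p.rootMultiplicity t := by
    intro t ht
    rw [hE', Finset.mem_filter] at ht
    obtain ⟨htT, htP⟩ := ht
    rw [hTdef, Finset.mem_filter, Multiset.mem_toFinset, mem_roots hp] at htT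
    obtain ⟨hroot, htI⟩ := htT
    -- find interval containing t
    have : ∃ i, t ∈ Set.Ioo (a i) (b i) := by
      rw [hI] at htI
      obtain ⟨idx, hidx⟩ := Set.mem_iUnion.1 htI
      rw [hF] at hidx
      rcases idx with j | i
      · exact absurd (Or.inl ⟨j, hidx⟩) htP
      · refine ⟨i, lt_of_le_of_ne hidx.1 ?_, lt_of_le_of_ne hidx.2 ?_⟩
        · exact fun h => htP (Or.inr ⟨i, Or.inl h.symm⟩)
        · exact fun h => htP (Or.inr ⟨i, Or.inr h⟩)
    obtain ⟨i, hti⟩ := this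
    have hmin : IsLocalMin (fun x => p.eval x) t := by
      have hnb : Set.Ioo (a i) (b i) ∈ nhds t := Ioo_mem_nhds hti.1 hti.2
      filter_upwards [hnb] with x hx
      have hxI : x ∈ I := by
        rw [hI]
        exact Set.mem_iUnion.2 ⟨Sum.inr i, by rw [hF]; exact Set.Ioo_subset_Icc_self hx⟩
      calc (fun x => p.eval x) t = 0 := hroot
        _ ≤ p.eval x := hnonneg x hxI
    have hderiv : p.derivative.IsRoot t := by
      have h0 : deriv (fun x => p.eval x) t = 0 := hmin.deriv_eq_zero
      rwa [Polynomial.deriv] at h0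
    exact (one_lt_rootMultiplicity_iff_isRoot hp).2 ⟨hroot, hderiv⟩
  -- counting
  have hcount : E.card + 2 * E'.card ≤ d := by
    calc E.card + 2 * E'.card
        = ∑ _t ∈ E, 1 + ∑ _t ∈ E', 2 := by
          simp [Finset.sum_const, mul_comm]
      _ ≤ ∑ t ∈ E, p.rootMultiplicity t + ∑ t ∈ E', p.rootMultiplicity t := by
          gcongr with t ht t ht
          · exact hmult1 t (Finset.filter_subset _ _ ht)
          · exact hmult2 t ht
      _ = ∑ t ∈ T, p.rootMultiplicity t := Finset.sum_filter_add_sum_filter_not _ _ _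
      _ ≤ d := hsum
  have h2m : 2 * T.card ≤ k₁ + 2 * k₂ + d := by omega
  have hTd : T.card ≤ d := by omega
  rw [hZT, Set.ncard_coe_finset, le_min_iff]
  constructor
  · rw [le_div_iff₀ (by norm_num : (0:ℝ) < 2)]
    have : ((2 * T.card : ℕ) : ℝ) ≤ ((k₁ + 2 * k₂ + d : ℕ) : ℝ) := by exact_mod_cast h2m
    push_cast at this
    linarith
  · exact_mod_cast hTd
end

section
/- For the linear homoscedastic model with f(t) = (1, t)ᵀ on I = [−1,1], the E-optimal design problem min{y : W ⪰ 0, tr(W) = 1, and the polynomial π(t) = (y − W₁₁) − 2W₁₂t − W₂₂t² is nonnegative on [−1,1]} has optimal value y = 1, and its optimal solution set is exactly {(y,W) : y = 1, W₁₂ = 0, W₁₁ + W₂₂ = 1, 0 ≤ W₁₁ ≤ 1}. -/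
open Matrix

theorem eoptimal_linear_model_solution_set :
    IsLeast {y : ℝ | ∃ W : Matrix (Fin 2) (Fin 2) ℝ, W.PosSemidef ∧ W.trace = 1 ∧
        ∀ t ∈ Set.Icc (-1 : ℝ) 1,
          0 ≤ (y - W 0 0) - 2 * W 0 1 * t - W 1 1 * t ^ 2} 1 ∧
      {p : ℝ × Matrix (Fin 2) (Fin 2) ℝ |
          (p.2.PosSemidef ∧ p.2.trace = 1 ∧
            ∀ t ∈ Set.Icc (-1 : ℝ) 1,
              0 ≤ (p.1 - p.2 0 0) - 2 * p.2 0 1 * t - p.2 1 1 * t ^ 2) ∧ p.1 = 1} =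
        {p : ℝ × Matrix (Fin 2) (Fin 2) ℝ |
          p.1 = 1 ∧ p.2 0 1 = 0 ∧ p.2 1 0 = 0 ∧ p.2 0 0 + p.2 1 1 = 1 ∧
            0 ≤ p.2 0 0 ∧ p.2 0 0 ≤ 1} := by
  constructor
  · constructor
    · refine ⟨!![1,0;0,0], ?_, ?_, ?_⟩
      · have : (!![1,0;0,0] : Matrix (Fin 2) (Fin 2) ℝ) = Matrix.diagonal ![1,0] := by
          ext i j; fin_cases i <;> fin_cases j <;> simp [Matrix.diagonal]
        rw [this]
        exact Matrix.PosSemidef.diagonal (by intro i; fin_cases i <;> norm_num)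
      · simp [Matrix.trace_fin_two]
      · intro t ht
        simp
    · rintro y ⟨W, hpsd, htr, hπ⟩
      have h1 := hπ 1 (by norm_num)
      have h2 := hπ (-1) (by norm_num)
      rw [Matrix.trace_fin_two] at htr
      nlinarith [h1, h2]
  · ext p
    obtain ⟨y, W⟩ := p
    simp only [Set.mem_setOf_eq]
    constructor
    · rintro ⟨⟨hpsd, htr, hπ⟩, hy⟩
      subst hy
      rw [Matrix.trace_fin_two] at htr
      have h1 := hπ 1 (by norm_num)
      have h2 := hπ (-1) (by norm_num)
      have h01 : W 0 1 = 0 := by nlinarith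
      have h10 : W 1 0 = 0 := by
        have := hpsd.1
        have h := congrFun (congrFun this 1) 0
        simpa [Matrix.conjTranspose_apply, h01] using h.symm
      have hd0 : 0 ≤ W 0 0 := by
        have := hpsd.dotProduct_mulVec_nonneg (Pi.single 0 1)
        simpa [Matrix.mulVec, dotProduct, Fin.sum_univ_two, Pi.single] using this
      have hd1 : 0 ≤ W 1 1 := by
        have := hpsd.dotProduct_mulVec_nonneg (Pi.single 1 1)
        simpa [Matrix.mulVec, dotProduct, Fin.sum_univ_two, Pi.single] using this
      exact ⟨rfl, h01, h10, htr, hd0, by linarith⟩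
    · rintro ⟨hy, h01, h10, hsum, h0, h1⟩
      subst hy
      refine ⟨⟨Matrix.PosSemidef.of_dotProduct_mulVec_nonneg ?_ ?_, ?_, ?_⟩, rfl⟩
      · ext i j
        fin_cases i <;> fin_cases j <;>
          simp [Matrix.conjTranspose_apply, h01, h10]
      · intro x
        have hx : star x ⬝ᵥ W *ᵥ x = W 0 0 * (x 0)^2 + W 1 1 * (x 1)^2 := by
          simp [Matrix.mulVec, dotProduct, Fin.sum_univ_two, h01, h10]
          ring
        rw [hx]
        have : 0 ≤ W 1 1 := by linarith
        positivity
      · rw [Matrix.trace_fin_two]; exact hsum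
      · intro t ht
        obtain ⟨htl, htr⟩ := ht
        rw [h01]
        have hW11 : W 1 1 = 1 - W 0 0 := by linarith
        have ht2 : t^2 ≤ 1 := by nlinarith
        nlinarith
end

section
/- Let Φ(M) = λ_min(M) on positive semidefinite m×m matrices and let 𝓜 be a compact convex set of positive semidefinite matrices. Then max_{M ∈ 𝓜} λ_min(M) = min over positive semidefinite W with tr(W) = 1 of max_{M ∈ 𝓜} ⟨W, M⟩. -/
open Matrix Finset

variable {m : ℕ}

private lemma auxContTrace (W : Matrix (Fin m) (Fin m) ℝ) :
    Continuous fun M : Matrix (Fin m) (Fin m) ℝ => (W * M).trace := by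
  have : (fun M : Matrix (Fin m) (Fin m) ℝ => (W * M).trace)
      = fun M => ∑ i, ∑ j, W i j * M j i := by
    funext M; simp [Matrix.trace, Matrix.mul_apply, Matrix.diag]
  rw [this]
  exact continuous_finset_sum _ fun i _ => continuous_finset_sum _ fun j _ =>
    (continuous_const.mul (((continuous_apply i).comp (continuous_apply j))))

private lemma auxContQuad (v : Fin m → ℝ) :
    Continuous fun X : Matrix (Fin m) (Fin m) ℝ => v ⬝ᵥ X *ᵥ v := by
  have : (fun X : Matrix (Fin m) (Fin m) ℝ => v ⬝ᵥ X *ᵥ v)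
      = fun X => ∑ i, ∑ j, v i * (X i j * v j) := by
    funext X; simp [dotProduct, Matrix.mulVec, Finset.mul_sum]
  rw [this]
  exact continuous_finset_sum _ fun i _ => continuous_finset_sum _ fun j _ =>
    continuous_const.mul ((((continuous_apply j).comp (continuous_apply i) :
      Continuous fun X : Matrix (Fin m) (Fin m) ℝ => X i j)).mul continuous_const)

private lemma auxBasisSq {A : Matrix (Fin m) (Fin m) ℝ} (hA : A.IsHermitian) (i : Fin m) :
    ∑ j, (⇑(hA.eigenvectorBasis i)) j ^ 2 = 1 := by
  have h := hA.eigenvectorBasis.orthonormal.1 i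
  rw [EuclideanSpace.norm_eq] at h
  have hnn : 0 ≤ ∑ j, ‖hA.eigenvectorBasis i j‖ ^ 2 :=
    Finset.sum_nonneg fun j _ => sq_nonneg _
  have h2 : ∑ j, ‖hA.eigenvectorBasis i j‖ ^ 2 = 1 := by
    rw [← Real.sq_sqrt hnn, h]; norm_num
  have h3 : ∑ j, (hA.eigenvectorBasis i j) ^ 2 = 1 := by
    simpa [Real.norm_eq_abs, sq_abs] using h2
  exact h3

private lemma auxEigenQuad {A : Matrix (Fin m) (Fin m) ℝ} (hA : A.IsHermitian) (i : Fin m) :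
    hA.eigenvalues i = ⇑(hA.eigenvectorBasis i) ⬝ᵥ A *ᵥ ⇑(hA.eigenvectorBasis i) := by
  rw [hA.mulVec_eigenvectorBasis, dotProduct_smul]
  have : ⇑(hA.eigenvectorBasis i) ⬝ᵥ ⇑(hA.eigenvectorBasis i) = 1 := by
    have := auxBasisSq hA i
    simpa [dotProduct, sq] using this
  rw [smul_eq_mul, this, mul_one]

private lemma auxEigenLB {A : Matrix (Fin m) (Fin m) ℝ} (hA : A.IsHermitian) (c : ℝ)
    (h : ∀ v : Fin m → ℝ, c * ∑ i, (v i) ^ 2 ≤ v ⬝ᵥ A *ᵥ v) (i : Fin m) :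
    c ≤ hA.eigenvalues i := by
  have h1 := h (⇑(hA.eigenvectorBasis i))
  rw [auxBasisSq hA i, mul_one] at h1
  rw [auxEigenQuad hA i]; exact h1

private lemma auxEigenUB (hm : 0 < m) {A : Matrix (Fin m) (Fin m) ℝ} (hA : A.IsHermitian) (R : ℝ)
    (hR : ∀ i j, |A i j| ≤ R) (i : Fin m) : hA.eigenvalues i ≤ (m : ℝ) ^ 2 * R := by
  rw [auxEigenQuad hA i]
  set v := ⇑(hA.eigenvectorBasis i) with hv
  have habs : ∀ j, |v j| ≤ 1 := by
    intro j
    have h1 : v j ^ 2 ≤ 1 := by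
      have h0 := Finset.single_le_sum (f := fun k => v k ^ 2)
        (fun k _ => sq_nonneg _) (Finset.mem_univ j)
      rw [hv] at h0 ⊢
      rwa [auxBasisSq hA i] at h0
    nlinarith [abs_nonneg (v j), sq_abs (v j)]
  have hRnn : 0 ≤ R := le_trans (abs_nonneg _) (hR ⟨0, hm⟩ ⟨0, hm⟩)
  calc v ⬝ᵥ A *ᵥ v = ∑ j, ∑ k, v j * (A j k * v k) := by
        simp [dotProduct, Matrix.mulVec, Finset.mul_sum]
    _ ≤ ∑ _j : Fin m, ∑ _k : Fin m, R := by
        refine Finset.sum_le_sum fun j _ => Finset.sum_le_sum fun k _ => ?_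
        calc v j * (A j k * v k) ≤ |v j * (A j k * v k)| := le_abs_self _
          _ = |v j| * |A j k| * |v k| := by rw [abs_mul, abs_mul]; ring
          _ ≤ 1 * R * 1 := by
              gcongr <;> [exact habs j; exact hR j k; exact habs k]
          _ = R := by ring
    _ = (m : ℝ) ^ 2 * R := by simp [Finset.sum_const]; ring

variable {m : ℕ}

private lemma auxShift {A : Matrix (Fin m) (Fin m) ℝ} (hA : A.IsHermitian) (t : ℝ)
    (ht : ∀ i, t ≤ hA.eigenvalues i) : (A - t • 1).PosSemidef := by
  classical
  set V : Matrix (Fin m) (Fin m) ℝ := (hA.eigenvectorUnitary : Matrix (Fin m) (Fin m) ℝ)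
  have hVu : V * star V = 1 := (Matrix.mem_unitaryGroup_iff).mp hA.eigenvectorUnitary.2
  have hD : (Matrix.diagonal (fun i => hA.eigenvalues i - t)).PosSemidef :=
    Matrix.PosSemidef.diagonal fun i => sub_nonneg.mpr (ht i)
  have key : A - t • 1 = V * Matrix.diagonal (fun i => hA.eigenvalues i - t) * star V := by
    have h1 : A = V * Matrix.diagonal (RCLike.ofReal ∘ hA.eigenvalues) * star V :=
      hA.spectral_theorem
    have h2 : Matrix.diagonal (fun i => hA.eigenvalues i - t)
        = Matrix.diagonal (RCLike.ofReal ∘ hA.eigenvalues) - t • 1 := by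
      ext i j
      by_cases hij : i = j <;> simp [Matrix.diagonal, hij, Matrix.one_apply]
    rw [h2, Matrix.mul_sub, Matrix.sub_mul, ← h1]
    congr 1
    have : V * (t • (1 : Matrix (Fin m) (Fin m) ℝ)) = t • V := by
      rw [Matrix.mul_smul, mul_one]
    rw [this, Matrix.smul_mul, hVu]
  rw [key, Matrix.star_eq_conjTranspose]
  exact hD.mul_mul_conjTranspose_same V

private lemma auxSqrt {W : Matrix (Fin m) (Fin m) ℝ} (hW : W.PosSemidef) :
    ∃ B : Matrix (Fin m) (Fin m) ℝ, W = Bᴴ * B := by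
  classical
  set U : Matrix (Fin m) (Fin m) ℝ := (hW.1.eigenvectorUnitary : Matrix (Fin m) (Fin m) ℝ)
  refine ⟨Matrix.diagonal (fun i => Real.sqrt (hW.1.eigenvalues i)) * star U, ?_⟩
  have h1 : W = U * Matrix.diagonal (RCLike.ofReal ∘ hW.1.eigenvalues) * star U :=
    hW.1.spectral_theorem
  have hd : Matrix.diagonal (RCLike.ofReal ∘ hW.1.eigenvalues)
      = (Matrix.diagonal (fun i => Real.sqrt (hW.1.eigenvalues i)))ᴴ
        * Matrix.diagonal (fun i => Real.sqrt (hW.1.eigenvalues i)) := by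
    rw [Matrix.diagonal_conjTranspose, Matrix.diagonal_mul_diagonal]
    congr 1; funext i
    simp [Real.mul_self_sqrt (hW.eigenvalues_nonneg i)]
  conv_lhs => rw [h1, hd]
  rw [Matrix.conjTranspose_mul, Matrix.star_eq_conjTranspose, Matrix.conjTranspose_conjTranspose]
  simp only [Matrix.mul_assoc]

private lemma auxTraceNonneg {W A : Matrix (Fin m) (Fin m) ℝ} (hW : W.PosSemidef)
    (hA : A.PosSemidef) : 0 ≤ (W * A).trace := by
  obtain ⟨B, rfl⟩ := auxSqrt hW
  obtain ⟨C, rfl⟩ := auxSqrt hA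
  have key : ∀ X : Matrix (Fin m) (Fin m) ℝ, 0 ≤ (Xᴴ * X).trace := by
    intro X
    have : (Xᴴ * X).trace = ∑ j, ∑ i, (X i j) ^ 2 := by
      simp [Matrix.trace, Matrix.mul_apply, Matrix.diag, Matrix.conjTranspose_apply, sq]
    rw [this]; positivity
  have h1 : (Bᴴ * B * (Cᴴ * C)).trace = ((C * Bᴴ)ᴴ * (C * Bᴴ)).trace := by
    rw [Matrix.conjTranspose_mul, Matrix.conjTranspose_conjTranspose, Matrix.mul_assoc,
      Matrix.trace_mul_comm (Bᴴ) (B * (Cᴴ * C))]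
    simp only [Matrix.mul_assoc]
  rw [h1]
  exact key _

private lemma auxWeak (hm : 0 < m) {W M : Matrix (Fin m) (Fin m) ℝ} (hW : W.PosSemidef)
    (htr : W.trace = 1) (hM : M.PosSemidef) :
    (⨅ i, hM.1.eigenvalues i) ≤ (W * M).trace := by
  have : Nonempty (Fin m) := ⟨⟨0, hm⟩⟩
  set t := ⨅ i, hM.1.eigenvalues i with htdef
  have ht : ∀ i, t ≤ hM.1.eigenvalues i := fun i =>
    ciInf_le (Set.Finite.bddBelow (Set.finite_range _)) i
  have hpos := auxTraceNonneg hW (auxShift hM.1 t ht)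
  have hexp : (W * (M - t • 1)).trace = (W * M).trace - t := by
    rw [Matrix.mul_sub, Matrix.trace_sub]
    have : W * (t • (1 : Matrix (Fin m) (Fin m) ℝ)) = t • W := by
      rw [Matrix.mul_smul, mul_one]
    rw [this, Matrix.trace_smul, htr]
    simp
  rw [hexp] at hpos
  linarith

theorem eoptimal_strong_duality
    {m : ℕ} (hm : 0 < m) (𝓜 : Set (Matrix (Fin m) (Fin m) ℝ)) (hne : 𝓜.Nonempty)
    (hcomp : IsCompact 𝓜) (hconv : Convex ℝ 𝓜) (hpsd : ∀ M ∈ 𝓜, M.PosSemidef) :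
    sSup {x : ℝ | ∃ M, ∃ hM : M ∈ 𝓜, x = ⨅ i, (hpsd M hM).1.eigenvalues i} =
      sInf {x : ℝ | ∃ W : Matrix (Fin m) (Fin m) ℝ, W.PosSemidef ∧ W.trace = 1 ∧
        x = sSup {y : ℝ | ∃ M ∈ 𝓜, y = (W * M).trace}} := by
  classical
  have hne' : Nonempty (Fin m) := ⟨⟨0, hm⟩⟩
  obtain ⟨M₀, hM₀⟩ := hne
  set lhs := {x : ℝ | ∃ M, ∃ hM : M ∈ 𝓜, x = ⨅ i, (hpsd M hM).1.eigenvalues i} with hlhsdef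
  set rhs := {x : ℝ | ∃ W : Matrix (Fin m) (Fin m) ℝ, W.PosSemidef ∧ W.trace = 1 ∧
        x = sSup {y : ℝ | ∃ M ∈ 𝓜, y = (W * M).trace}} with hrhsdef
  -- entrywise bound on 𝓜
  obtain ⟨R, hR⟩ : ∃ R : ℝ, ∀ M ∈ 𝓜, ∀ i j, |M i j| ≤ R := by
    have h1 : ∀ i j : Fin m, ∃ R, ∀ M ∈ 𝓜, |M i j| ≤ R := by
      intro i j
      obtain ⟨C, hC⟩ := hcomp.exists_bound_of_continuousOn (f := fun M => M i j)
        (((continuous_apply j).comp (continuous_apply i)).continuousOn)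
      exact ⟨C, fun M hM => by simpa using hC M hM⟩
    choose Rf hRf using h1
    refine ⟨∑ i, ∑ j, |Rf i j|, fun M hM i j => ?_⟩
    calc |M i j| ≤ Rf i j := hRf i j M hM
      _ ≤ |Rf i j| := le_abs_self _
      _ ≤ ∑ j', |Rf i j'| :=
          Finset.single_le_sum (f := fun j' => |Rf i j'|) (fun _ _ => abs_nonneg _)
            (Finset.mem_univ j)
      _ ≤ ∑ i', ∑ j', |Rf i' j'| :=
          Finset.single_le_sum (f := fun i' => ∑ j', |Rf i' j'|)
            (fun _ _ => Finset.sum_nonneg fun _ _ => abs_nonneg _) (Finset.mem_univ i)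
  have hlhsbdd : BddAbove lhs := by
    refine ⟨(m : ℝ) ^ 2 * R, ?_⟩
    rintro x ⟨M, hM, rfl⟩
    exact le_trans (ciInf_le (Set.Finite.bddBelow (Set.finite_range _)) ⟨0, hm⟩)
      (auxEigenUB hm (hpsd M hM).1 R (hR M hM) ⟨0, hm⟩)
  have hlhsne : lhs.Nonempty := ⟨_, M₀, hM₀, rfl⟩
  have hα : ∀ M (hM : M ∈ 𝓜), (⨅ i, (hpsd M hM).1.eigenvalues i) ≤ sSup lhs :=
    fun M hM => le_csSup hlhsbdd ⟨M, hM, rfl⟩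
  have hbddimg : ∀ W : Matrix (Fin m) (Fin m) ℝ,
      BddAbove {y : ℝ | ∃ M ∈ 𝓜, y = (W * M).trace} := by
    intro W
    have himg : {y : ℝ | ∃ M ∈ 𝓜, y = (W * M).trace} = (fun M => (W * M).trace) '' 𝓜 := by
      ext y; constructor
      · rintro ⟨M, hM, rfl⟩; exact ⟨M, hM, rfl⟩
      · rintro ⟨M, hM, rfl⟩; exact ⟨M, hM, rfl⟩
    rw [himg]
    exact (hcomp.image (auxContTrace W)).bddAbove
  have hweak : ∀ x ∈ rhs, sSup lhs ≤ x := by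
    rintro x ⟨W, hWpsd, hWtr, rfl⟩
    refine csSup_le hlhsne ?_
    rintro y ⟨M, hM, rfl⟩
    exact le_trans (auxWeak hm hWpsd hWtr (hpsd M hM)) (le_csSup (hbddimg W) ⟨M, hM, rfl⟩)
  have hstrong : ∀ ε : ℝ, 0 < ε → ∃ x ∈ rhs, x ≤ sSup lhs + ε := by
    intro ε hε
    set α := sSup lhs with hαdef
    set T := {X : Matrix (Fin m) (Fin m) ℝ | ∀ v : Fin m → ℝ,
      (α + ε) * ∑ i, (v i) ^ 2 ≤ v ⬝ᵥ X *ᵥ v} with hTdef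
    have hTclosed : IsClosed T := by
      have : T = ⋂ v : Fin m → ℝ,
          {X : Matrix (Fin m) (Fin m) ℝ | (α + ε) * ∑ i, (v i) ^ 2 ≤ v ⬝ᵥ X *ᵥ v} := by
        ext X; simp only [hTdef, Set.mem_iInter, Set.mem_setOf_eq]
      rw [this]
      exact isClosed_iInter fun v => isClosed_le continuous_const (auxContQuad v)
    have hTconv : Convex ℝ T := by
      rintro X hX Y hY a b ha hb hab
      intro v
      have hsum : v ⬝ᵥ (a • X + b • Y) *ᵥ v
          = a * (v ⬝ᵥ X *ᵥ v) + b * (v ⬝ᵥ Y *ᵥ v) := by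
        simp [Matrix.add_mulVec, Matrix.smul_mulVec, dotProduct_add, dotProduct_smul,
          smul_eq_mul]
      rw [hsum]
      calc (α + ε) * ∑ i, (v i) ^ 2
          = a * ((α + ε) * ∑ i, (v i) ^ 2) + b * ((α + ε) * ∑ i, (v i) ^ 2) := by
            rw [← add_mul, hab, one_mul]
        _ ≤ a * (v ⬝ᵥ X *ᵥ v) + b * (v ⬝ᵥ Y *ᵥ v) :=
            add_le_add (mul_le_mul_of_nonneg_left (hX v) ha)
              (mul_le_mul_of_nonneg_left (hY v) hb)
    have hdisj : Disjoint 𝓜 T := by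
      rw [Set.disjoint_left]
      intro M hM hMT
      have h2 : α + ε ≤ ⨅ i, (hpsd M hM).1.eigenvalues i :=
        le_ciInf (auxEigenLB (hpsd M hM).1 _ hMT)
      have h3 := hα M hM
      linarith
    haveI : LocallyConvexSpace ℝ (Matrix (Fin m) (Fin m) ℝ) :=
      (inferInstance : LocallyConvexSpace ℝ (Fin m → Fin m → ℝ))
    obtain ⟨f, u, v', hfu, huv, hvf⟩ :=
      geometric_hahn_banach_compact_closed hconv hcomp hTconv hTclosed hdisj
    set W0 : Matrix (Fin m) (Fin m) ℝ := Matrix.of fun i j => f (Matrix.single i j 1) with hW0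
    have hrep : ∀ X : Matrix (Fin m) (Fin m) ℝ, f X = ∑ i, ∑ j, X i j * W0 i j := by
      intro X
      conv_lhs => rw [matrix_eq_sum_single X]
      rw [map_sum]
      refine Finset.sum_congr rfl fun i _ => ?_
      rw [map_sum]
      refine Finset.sum_congr rfl fun j _ => ?_
      have hsm : Matrix.single i j (X i j) = X i j • Matrix.single i j 1 := by
        ext a b
        simp [Matrix.single, Matrix.smul_apply]
      rw [hsm, _root_.map_smul, smul_eq_mul]
      rfl
    have hanchor : ((α + ε) • (1 : Matrix (Fin m) (Fin m) ℝ)) ∈ T := by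
      intro v
      have : v ⬝ᵥ ((α + ε) • (1 : Matrix (Fin m) (Fin m) ℝ)) *ᵥ v
          = (α + ε) * ∑ i, (v i) ^ 2 := by
        simp only [Matrix.smul_mulVec, Matrix.one_mulVec, dotProduct_smul, smul_eq_mul,
          dotProduct, sq, Finset.mul_sum]
        exact Finset.sum_congr rfl fun i _ => by
          simp only [Pi.smul_apply, smul_eq_mul]; ring
      rw [this]
    have hdir : ∀ K : Matrix (Fin m) (Fin m) ℝ, (∀ v, 0 ≤ v ⬝ᵥ K *ᵥ v) → 0 ≤ f K := by
      intro K hK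
      by_contra hneg
      push_neg at hneg
      set X := ((α + ε) • (1 : Matrix (Fin m) (Fin m) ℝ)) with hXdef
      have hXv : v' < f X := hvf _ hanchor
      set t := (f X - v') / (-(f K)) + 1 with htdef
      have hKne : f K ≠ 0 := ne_of_lt hneg
      have hdivpos : 0 < (f X - v') / (-(f K)) := div_pos (by linarith) (by linarith)
      have ht1 : 0 < t := by rw [htdef]; linarith
      have hmem : X + t • K ∈ T := by
        intro v
        have hq : v ⬝ᵥ (X + t • K) *ᵥ v = (v ⬝ᵥ X *ᵥ v) + t * (v ⬝ᵥ K *ᵥ v) := by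
          simp [Matrix.add_mulVec, Matrix.smul_mulVec, dotProduct_add, dotProduct_smul,
            smul_eq_mul]
        rw [hq]
        have h1 := hanchor v
        nlinarith [hK v]
      have hcontra := hvf _ hmem
      have hft : f (X + t • K) = f X + t * f K := by
        simp only [map_add, ContinuousLinearMap.map_smul, smul_eq_mul]
      have htK : (f X - v') / (-(f K)) * f K = -(f X - v') := by
        rw [div_neg, neg_mul, div_mul_cancel₀ _ hKne]
      rw [hft, htdef, add_mul, htK, one_mul] at hcontra
      linarith
    set W1 : Matrix (Fin m) (Fin m) ℝ := Matrix.of fun i j => (W0 i j + W0 j i) / 2 with hW1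
    have hW1sym : W1.IsHermitian := by
      ext i j
      simp [Matrix.conjTranspose_apply, hW1]
      ring
    have hsumswap : ∀ X : Matrix (Fin m) (Fin m) ℝ, X.IsHermitian →
        ∑ i, ∑ j, X i j * W1 i j = f X := by
      intro X hX
      have hX' : ∀ i j, X j i = X i j := fun i j => by
        have := hX.apply i j
        simpa using this
      have h1 : ∑ i, ∑ j, X i j * W0 j i = ∑ i, ∑ j, X i j * W0 i j := by
        rw [Finset.sum_comm]
        refine Finset.sum_congr rfl fun i _ => Finset.sum_congr rfl fun j _ => ?_
        rw [hX' i j]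
      have h2 : ∀ i j, X i j * W1 i j = (X i j * W0 i j + X i j * W0 j i) / 2 := by
        intro i j
        simp only [hW1, Matrix.of_apply]
        ring
      calc ∑ i, ∑ j, X i j * W1 i j
          = ∑ i, ∑ j, (X i j * W0 i j + X i j * W0 j i) / 2 := by
            exact Finset.sum_congr rfl fun i _ => Finset.sum_congr rfl fun j _ => h2 i j
        _ = (∑ i, ∑ j, (X i j * W0 i j + X i j * W0 j i)) / 2 := by
            rw [Finset.sum_div]
            exact Finset.sum_congr rfl fun i _ => (Finset.sum_div _ _ _).symm
        _ = ((∑ i, ∑ j, X i j * W0 i j) + ∑ i, ∑ j, X i j * W0 j i) / 2 := by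
            congr 1
            rw [← Finset.sum_add_distrib]
            exact Finset.sum_congr rfl fun i _ => Finset.sum_add_distrib
        _ = f X := by rw [h1, hrep X]; ring
    have hfsym : ∀ X : Matrix (Fin m) (Fin m) ℝ, X.IsHermitian → f X = (W1 * X).trace := by
      intro X hX
      have hX' : ∀ i j, X j i = X i j := fun i j => by
        have := hX.apply i j
        simpa using this
      have : (W1 * X).trace = ∑ i, ∑ j, X i j * W1 i j := by
        rw [Matrix.trace]
        simp only [Matrix.diag, Matrix.mul_apply]
        exact Finset.sum_congr rfl fun i _ => Finset.sum_congr rfl fun j _ => by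
          rw [hX' i j]; ring
      rw [this, hsumswap X hX]
    have hquadW1 : ∀ x : Fin m → ℝ, x ⬝ᵥ W1 *ᵥ x = f (Matrix.of fun i j => x i * x j) := by
      intro x
      have hKsym : (Matrix.of fun i j => x i * x j : Matrix (Fin m) (Fin m) ℝ).IsHermitian := by
        ext i j
        simp [Matrix.conjTranspose_apply]
        ring
      rw [← hsumswap _ hKsym]
      simp only [dotProduct, Matrix.mulVec, Matrix.of_apply]
      refine Finset.sum_congr rfl fun i _ => ?_
      rw [Finset.mul_sum]
      exact Finset.sum_congr rfl fun j _ => by ring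
    have hquadW1nn : ∀ x : Fin m → ℝ, 0 ≤ x ⬝ᵥ W1 *ᵥ x := by
      intro x
      rw [hquadW1 x]
      refine hdir _ fun v => ?_
      have h1 : ∀ i, (∑ j, (Matrix.of fun i j => x i * x j : Matrix (Fin m) (Fin m) ℝ) i j * v j)
          = x i * ∑ j, x j * v j := by
        intro i
        rw [Finset.mul_sum]
        exact Finset.sum_congr rfl fun j _ => by simp [Matrix.of_apply]; ring
      have h2 : v ⬝ᵥ (Matrix.of fun i j => x i * x j : Matrix (Fin m) (Fin m) ℝ) *ᵥ v
          = (∑ j, x j * v j) * (∑ j, x j * v j) := by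
        simp only [dotProduct, Matrix.mulVec]
        calc ∑ i, v i * ∑ j, (Matrix.of fun i j => x i * x j : Matrix (Fin m) (Fin m) ℝ) i j * v j
            = ∑ i, v i * (x i * ∑ j, x j * v j) := by
              exact Finset.sum_congr rfl fun i _ => by rw [h1 i]
          _ = (∑ j, x j * v j) * (∑ j, x j * v j) := by
              rw [Finset.sum_mul]
              exact Finset.sum_congr rfl fun i _ => by ring
      rw [h2]
      exact mul_self_nonneg _
    have hW1psd : W1.PosSemidef := by
      refine Matrix.posSemidef_iff_dotProduct_mulVec.mpr ⟨hW1sym, fun x => ?_⟩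
      have hsx : star x = x := by simp
      rw [hsx]
      exact hquadW1nn x
    have hdiag : ∀ i, 0 ≤ W1 i i := by
      intro i
      have h := hquadW1nn (Pi.single i 1)
      have heq : (Pi.single i 1 : Fin m → ℝ) ⬝ᵥ W1 *ᵥ Pi.single i 1 = W1 i i := by
        simp [dotProduct, Matrix.mulVec, Pi.single_apply, Finset.mul_sum]
      rwa [heq] at h
    have htrnn : 0 ≤ W1.trace := Finset.sum_nonneg fun i _ => hdiag i
    have hherm1 : ((α + ε) • (1 : Matrix (Fin m) (Fin m) ℝ)).IsHermitian := by
      unfold Matrix.IsHermitian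
      rw [Matrix.conjTranspose_smul, Matrix.conjTranspose_one]
      simp
    have hfanchor : f ((α + ε) • (1 : Matrix (Fin m) (Fin m) ℝ)) = (α + ε) * W1.trace := by
      rw [hfsym _ hherm1, Matrix.mul_smul, mul_one, Matrix.trace_smul, smul_eq_mul]
    have hM₀f : 0 ≤ f M₀ := by
      rw [hfsym M₀ (hpsd M₀ hM₀).1]
      exact auxTraceNonneg hW1psd (hpsd M₀ hM₀)
    have hchain0 : f M₀ < u := hfu M₀ hM₀
    have hanchorf : v' < f ((α + ε) • (1 : Matrix (Fin m) (Fin m) ℝ)) := hvf _ hanchor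
    have htrpos : 0 < W1.trace := by
      rcases htrnn.lt_or_eq with h | h
      · exact h
      · exfalso
        rw [hfanchor, ← h, mul_zero] at hanchorf
        linarith
    have hWpsd : (W1.trace⁻¹ • W1).PosSemidef := by
      refine Matrix.posSemidef_iff_dotProduct_mulVec.mpr ⟨?_, fun x => ?_⟩
      · unfold Matrix.IsHermitian
        rw [Matrix.conjTranspose_smul, hW1sym.eq]
        simp
      · have hsx : star x = x := by simp
        rw [hsx]
        have : x ⬝ᵥ (W1.trace⁻¹ • W1) *ᵥ x = W1.trace⁻¹ * (x ⬝ᵥ W1 *ᵥ x) := by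
          rw [Matrix.smul_mulVec, dotProduct_smul, smul_eq_mul]
        rw [this]
        exact mul_nonneg (inv_nonneg.mpr htrpos.le) (hquadW1nn x)
    have hWtr : (W1.trace⁻¹ • W1).trace = 1 := by
      rw [Matrix.trace_smul, smul_eq_mul, inv_mul_cancel₀ htrpos.ne']
    have hbnd : ∀ M ∈ 𝓜, ((W1.trace⁻¹ • W1) * M).trace ≤ α + ε := by
      intro M hM
      have h1 : ((W1.trace⁻¹ • W1) * M).trace = W1.trace⁻¹ * (W1 * M).trace := by
        rw [Matrix.smul_mul, Matrix.trace_smul, smul_eq_mul]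
      have h2 : (W1 * M).trace ≤ (α + ε) * W1.trace := by
        rw [← hfsym M (hpsd M hM).1]
        have := hfu M hM
        rw [hfanchor] at hanchorf
        linarith
      rw [h1]
      calc W1.trace⁻¹ * (W1 * M).trace ≤ W1.trace⁻¹ * ((α + ε) * W1.trace) :=
            mul_le_mul_of_nonneg_left h2 (inv_nonneg.mpr htrpos.le)
        _ = α + ε := by
            rw [mul_comm (α + ε), ← mul_assoc, inv_mul_cancel₀ htrpos.ne', one_mul]
    refine ⟨sSup {y : ℝ | ∃ M ∈ 𝓜, y = ((W1.trace⁻¹ • W1) * M).trace},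
      ⟨W1.trace⁻¹ • W1, hWpsd, hWtr, rfl⟩, ?_⟩
    refine csSup_le ⟨_, ⟨M₀, hM₀, rfl⟩⟩ ?_
    rintro y ⟨M, hM, rfl⟩
    exact hbnd M hM
  have hrhsne : rhs.Nonempty := by
    obtain ⟨x, hx, _⟩ := hstrong 1 one_pos
    exact ⟨x, hx⟩
  have hbb : BddBelow rhs := ⟨sSup lhs, fun x hx => hweak x hx⟩
  refine le_antisymm (le_csInf hrhsne hweak) ?_
  by_contra hlt
  push_neg at hlt
  obtain ⟨x, hx, hxle⟩ := hstrong ((sInf rhs - sSup lhs) / 2) (by linarith)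
  have := csInf_le hbb hx
  linarith
end
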